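/- Let A be a skew brace. Then the map r_A : A × A → A × A defined by r_A(x,y) = (-x + x∘y, (-x + x∘y)'∘x∘y), where z' denotes the inverse of z in (A,∘), is bijective and satisfies the Yang–Baxter equation r₁r₂r₁ = r₂r₁r₂ on A³, where r₁ = r_A × id and r₂ = id × r_A. -/
import Mathlib


def IsSkewBrace (A : Type*) [AddGroup A] [Group A] : Prop :=
  ∀ a b c : A, a * (b + c) = a * b - a + a * c

section Aux

variable {A : Type*} [AddGroup A] [Group A]

private def lamF (a b : A) : A := -a + a * b

private def rhoF (a b : A) : A := (lamF a b)⁻¹ * a * b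

private lemma sb_mul_zero (h : IsSkewBrace A) (a : A) : a * (0 : A) = a := by
  have h0 := h a 0 0
  rw [add_zero, sub_eq_add_neg] at h0
  -- h0 : a * 0 = a * 0 + -a + a * 0
  have h1 : a * 0 + 0 = a * 0 + (-a + a * 0) := by
    rw [add_zero, ← add_assoc]; exact h0
  have h2 := add_left_cancel h1
  exact (neg_add_eq_zero.mp h2.symm).symm

private lemma sb_mul_neg (h : IsSkewBrace A) (a b : A) :
    a * (-b) = a + -(a * b) + a := by
  have h0 := h a b (-b)
  rw [add_neg_cancel, sb_mul_zero h, sub_eq_add_neg] at h0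
  -- h0 : a = a * b + -a + a * (-b)
  have h1 : a * (-b) = -(a * b + -a) + a := by
    rw [eq_neg_add_iff_add_eq]
    exact h0.symm
  rw [h1, neg_add_rev, neg_neg]

private lemma K1 (a b : A) : lamF a b * rhoF a b = a * b := by
  simp [lamF, rhoF, mul_assoc]

private lemma K2 (h : IsSkewBrace A) (a b c : A) :
    lamF (a * b) c = lamF a (lamF b c) := by
  show -(a * b) + (a * b) * c = -a + a * (-b + b * c)
  rw [h, sb_mul_neg h, sub_eq_add_neg, mul_assoc]
  simp [add_assoc]

private lemma K4 (h : IsSkewBrace A) (a b c : A) :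
    lamF a b * lamF (rhoF a b) c = lamF a (b * c) := by
  have hvu : lamF a b * rhoF a b = a * b := K1 a b
  show lamF a b * (-(rhoF a b) + rhoF a b * c) = lamF a (b * c)
  rw [h, sb_mul_neg h, hvu, sub_eq_add_neg,
    ← mul_assoc (lamF a b) (rhoF a b) c, hvu]
  show _ = -a + a * (b * c)
  simp [lamF, mul_assoc, add_assoc]

private lemma K3 (h : IsSkewBrace A) (a b c : A) :
    rhoF (rhoF a b) c = rhoF a (b * c) := by
  have h4 := K4 h a b c
  show (lamF (rhoF a b) c)⁻¹ * rhoF a b * c = (lamF a (b * c))⁻¹ * a * (b * c)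
  rw [← h4, mul_inv_rev]
  have hu : rhoF a b = (lamF a b)⁻¹ * (a * b) := by
    show (lamF a b)⁻¹ * a * b = _; rw [mul_assoc]
  rw [hu]
  simp [mul_assoc]

private lemma lam_braid (h : IsSkewBrace A) (x y z : A) :
    lamF (lamF x y) (lamF (rhoF x y) z) = lamF x (lamF y z) := by
  rw [← K2 h, K1, K2 h]

private lemma rho_braid (h : IsSkewBrace A) (x y z : A) :
    rhoF (rhoF x y) z = rhoF (rhoF x (lamF y z)) (rhoF y z) := by
  rw [K3 h, K3 h, K1]

private lemma mid_braid (h : IsSkewBrace A) (x y z : A) :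
    rhoF (lamF x y) (lamF (rhoF x y) z) = lamF (rhoF x (lamF y z)) (rhoF y z) := by
  have hF := lam_braid h x y z
  have hT := rho_braid h x y z
  have e1 : lamF x y * (lamF (rhoF x y) z * rhoF (rhoF x y) z) = x * y * z := by
    rw [K1, ← mul_assoc, K1]
  have e2 : lamF x (lamF y z) * (rhoF x (lamF y z) * rhoF y z) = x * (y * z) := by
    rw [← mul_assoc, K1, mul_assoc, K1]
  have e1' : lamF x y * lamF (rhoF x y) z
      = x * y * z * (rhoF (rhoF x y) z)⁻¹ := by
    rw [eq_mul_inv_iff_mul_eq, mul_assoc, e1]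
  have e2' : rhoF x (lamF y z) * rhoF y z
      = (lamF x (lamF y z))⁻¹ * (x * (y * z)) := by
    rw [eq_inv_mul_iff_mul_eq, e2]
  have hPQ : lamF (rhoF x (lamF y z)) (rhoF y z)
      = rhoF x (lamF y z) * rhoF y z * (rhoF (rhoF x y) z)⁻¹ := by
    rw [eq_mul_inv_iff_mul_eq, hT, K1]
  show (lamF (lamF x y) (lamF (rhoF x y) z))⁻¹ * lamF x y * lamF (rhoF x y) z
      = lamF (rhoF x (lamF y z)) (rhoF y z)
  rw [hF, hPQ, e2',
    mul_assoc (lamF x (lamF y z))⁻¹ (lamF x y) (lamF (rhoF x y) z), e1']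
  simp [mul_assoc]

end Aux

/-- The canonical solution to the Yang–Baxter equation associated with a skew
brace: r(x,y) = (-x + x∘y, (-x + x∘y)' ∘ x ∘ y) is bijective and satisfies the
braid relation r₁ ∘ r₂ ∘ r₁ = r₂ ∘ r₁ ∘ r₂. -/
theorem skewBrace_yang_baxter (A : Type*) [AddGroup A] [Group A]
    (h : IsSkewBrace A)
    (rA : A × A → A × A)
    (hrA : ∀ x y : A, rA (x, y) = (-x + x * y, (-x + x * y)⁻¹ * x * y))
    (r₁ r₂ : A × A × A → A × A × A)
    (hr₁ : ∀ x y z : A, r₁ (x, y, z) = ((rA (x, y)).1, (rA (x, y)).2, z))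
    (hr₂ : ∀ x y z : A, r₂ (x, y, z) = (x, rA (y, z))) :
    Function.Bijective rA ∧ r₁ ∘ r₂ ∘ r₁ = r₂ ∘ r₁ ∘ r₂ := by
  have hA' : ∀ u w : A, rA (u, w) = (lamF u w, rhoF u w) := fun u w => hrA u w
  constructor
  · refine Function.bijective_iff_has_inverse.mpr
      ⟨fun p => (p.1 * p.2 + -p.1, (p.1 * p.2 + -p.1)⁻¹ * (p.1 * p.2)), ?_, ?_⟩
    · rintro ⟨x, y⟩
      rw [hrA x y]
      simp [mul_assoc, add_assoc, Prod.ext_iff]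
    · rintro ⟨u, v⟩
      show rA (u * v + -u, (u * v + -u)⁻¹ * (u * v)) = (u, v)
      rw [hrA]
      simp [mul_assoc, add_assoc, Prod.ext_iff]
  · funext p
    obtain ⟨x, y, z⟩ := p
    simp only [Function.comp_apply]
    have s1 : r₁ (x, y, z) = (lamF x y, rhoF x y, z) := by rw [hr₁, hA']
    have s2 : r₂ (lamF x y, rhoF x y, z)
        = (lamF x y, lamF (rhoF x y) z, rhoF (rhoF x y) z) := by
      rw [hr₂, hA']
    have s3 : r₁ (lamF x y, lamF (rhoF x y) z, rhoF (rhoF x y) z)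
        = (lamF (lamF x y) (lamF (rhoF x y) z),
           rhoF (lamF x y) (lamF (rhoF x y) z), rhoF (rhoF x y) z) := by
      rw [hr₁, hA']
    have t1 : r₂ (x, y, z) = (x, lamF y z, rhoF y z) := by rw [hr₂, hA']
    have t2 : r₁ (x, lamF y z, rhoF y z)
        = (lamF x (lamF y z), rhoF x (lamF y z), rhoF y z) := by
      rw [hr₁, hA']
    have t3 : r₂ (lamF x (lamF y z), rhoF x (lamF y z), rhoF y z)
        = (lamF x (lamF y z), lamF (rhoF x (lamF y z)) (rhoF y z),
           rhoF (rhoF x (lamF y z)) (rhoF y z)) := by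
      rw [hr₂, hA']
    rw [s1, s2, s3, t1, t2, t3]
    exact Prod.ext (lam_braid h x y z)
      (Prod.ext (mid_braid h x y z) (rho_braid h x y z))
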